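/- arXiv:2012.10929 — 5 statements merged into one kernel-verified Lean document; each statement's English description precedes it below -/
import Mathlib

section
/- (Theorem 2) Let C_t = convexHull ℝ {y_1^(t), …, y_n^(t)} be the convex hull of the WBMS iterates at step t. Then the sequence of convex hulls is decreasing: C_{t+1} ⊆ C_t for every t ≥ 0. -/
/-- Theorem 2: the convex hulls `C_t = convexHull ℝ {y_1^(t),…,y_n^(t)}`
of the WBMS iterates form a decreasing sequence of sets. -/
theorem wbms_convexHull_decreasing
    (n p : ℕ) (hn : 0 < n) (hp : 0 < p)
    (x : Fin n → Fin p → ℝ) (h lam : ℝ) (hh : 0 < h) (hlam : 0 < lam)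
    (y : ℕ → Fin n → Fin p → ℝ) (w : ℕ → Fin p → ℝ)
    (hy0 : ∀ i, y 0 i = x i)
    (hw : ∀ t l, w t l =
      Real.exp (-(1 / (n * lam)) * ∑ i, (x i l - y t i l) ^ 2) /
        ∑ l' : Fin p, Real.exp (-(1 / (n * lam)) * ∑ i, (x i l' - y t i l') ^ 2))
    (hy : ∀ t i, y (t + 1) i =
      ∑ j, (Real.exp (-(∑ l, w t l * (y t i l - y t j l) ^ 2) / h) /
        ∑ j' : Fin n, Real.exp (-(∑ l, w t l * (y t i l - y t j' l) ^ 2) / h)) • y t j)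
    (C : ℕ → Set (Fin p → ℝ))
    (hC : ∀ t, C t = convexHull ℝ (Set.range (y t))) :
    ∀ t : ℕ, C (t + 1) ⊆ C t := by
  intro t
  rw [hC, hC]
  apply convexHull_min _ (convex_convexHull ℝ _)
  rintro _ ⟨i, rfl⟩
  rw [hy t i]
  have hdenpos : (0:ℝ) < ∑ j' : Fin n, Real.exp (-(∑ l, w t l * (y t i l - y t j' l) ^ 2) / h) :=
    Finset.sum_pos (fun j _ => Real.exp_pos _) (Finset.univ_nonempty_iff.2 ⟨⟨0, hn⟩⟩)
  exact (convex_convexHull ℝ _).sum_mem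
    (fun j _ => div_nonneg (Real.exp_pos _).le hdenpos.le)
    (by rw [← Finset.sum_div, div_self hdenpos.ne'])
    (fun j _ => subset_convexHull ℝ _ ⟨j, rfl⟩)
end

section
/- Define a_t = max_{1 ≤ i,j ≤ n} ‖y_i^(t) − y_j^(t)‖₂, the maximum pairwise Euclidean distance among the WBMS iterates at step t. Then the sequence (a_t) is nonincreasing: a_{t+1} ≤ a_t for every t ≥ 0. -/
lemma conv_dist_le {ι : Type*} [Fintype ι] {E : Type*} [NormedAddCommGroup E]
    [NormedSpace ℝ E] (c : ι → ℝ) (hc : ∀ k, 0 ≤ c k) (hs : ∑ k, c k = 1)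
    (f : ι → E) (z : E) (D : ℝ) (hd : ∀ k, dist z (f k) ≤ D) :
    dist z (∑ k, c k • f k) ≤ D := by
  have hz : z = ∑ k, c k • z := by rw [← Finset.sum_smul, hs, one_smul]
  calc dist z (∑ k, c k • f k) = ‖∑ k, c k • z - ∑ k, c k • f k‖ := by
        rw [dist_eq_norm]; rw [← hz]
    _ = ‖∑ k, c k • (z - f k)‖ := by
        rw [← Finset.sum_sub_distrib]; simp [smul_sub]
    _ ≤ ∑ k, ‖c k • (z - f k)‖ := norm_sum_le _ _
    _ ≤ ∑ k, c k * D := by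
        refine Finset.sum_le_sum fun k _ => ?_
        rw [norm_smul, Real.norm_eq_abs, abs_of_nonneg (hc k)]
        exact mul_le_mul_of_nonneg_left (by rw [← dist_eq_norm]; exact hd k) (hc k)
    _ = D := by rw [← Finset.sum_mul, hs, one_mul]

/-- the maximum pairwise Euclidean distance among the WBMS
iterates, `a_t = max_{i,j} ‖y_i^(t) − y_j^(t)‖₂`, is nonincreasing in `t`. -/
theorem wbms_max_pairwise_distance_antitone
    (n p : ℕ) (hn : 0 < n) (hp : 0 < p)
    (x : Fin n → Fin p → ℝ) (h lam : ℝ) (hh : 0 < h) (hlam : 0 < lam)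
    (y : ℕ → Fin n → Fin p → ℝ) (w : ℕ → Fin p → ℝ)
    (hy0 : ∀ i, y 0 i = x i)
    (hw : ∀ t l, w t l =
      Real.exp (-(1 / (n * lam)) * ∑ i, (x i l - y t i l) ^ 2) /
        ∑ l' : Fin p, Real.exp (-(1 / (n * lam)) * ∑ i, (x i l' - y t i l') ^ 2))
    (hy : ∀ t i, y (t + 1) i =
      ∑ j, (Real.exp (-(∑ l, w t l * (y t i l - y t j l) ^ 2) / h) /
        ∑ j' : Fin n, Real.exp (-(∑ l, w t l * (y t i l - y t j' l) ^ 2) / h)) • y t j)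
    (a : ℕ → ℝ)
    (ha : ∀ t, a t = ⨆ i : Fin n, ⨆ j : Fin n,
      Real.sqrt (∑ l, (y t i l - y t j l) ^ 2)) :
    ∀ t : ℕ, a (t + 1) ≤ a t := by
  have : Nonempty (Fin n) := ⟨⟨0, hn⟩⟩
  intro t
  set T := (WithLp.linearEquiv 2 ℝ (Fin p → ℝ)).symm with hT
  set Y : ℕ → Fin n → EuclideanSpace ℝ (Fin p) := fun s i => T (y s i) with hY
  have hdist : ∀ s i j, Real.sqrt (∑ l, (y s i l - y s j l) ^ 2)
      = dist (Y s i) (Y s j) := by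
    intro s i j
    rw [EuclideanSpace.dist_eq]
    congr 1
    refine Finset.sum_congr rfl fun l _ => ?_
    rw [Real.dist_eq, sq_abs]
    rfl
  -- coefficients
  set c : Fin n → Fin n → ℝ := fun i j =>
    Real.exp (-(∑ l, w t l * (y t i l - y t j l) ^ 2) / h) /
      ∑ j' : Fin n, Real.exp (-(∑ l, w t l * (y t i l - y t j' l) ^ 2) / h) with hc
  have hSpos : ∀ i, 0 < ∑ j' : Fin n,
      Real.exp (-(∑ l, w t l * (y t i l - y t j' l) ^ 2) / h) :=
    fun i => Finset.sum_pos (fun j _ => Real.exp_pos _) Finset.univ_nonempty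
  have hcnn : ∀ i j, 0 ≤ c i j := fun i j =>
    div_nonneg (Real.exp_pos _).le (hSpos i).le
  have hcsum : ∀ i, ∑ j, c i j = 1 := by
    intro i
    rw [← Finset.sum_div, div_self (hSpos i).ne']
  have hYrec : ∀ i, Y (t + 1) i = ∑ j, c i j • Y t j := by
    intro i
    rw [hY]
    simp only [hy t i, map_sum, map_smul]
    rfl
  -- a t bounds all pairwise distances at time t
  have hbdd : ∀ i : Fin n, BddAbove (Set.range fun j : Fin n =>
      Real.sqrt (∑ l, (y t i l - y t j l) ^ 2)) :=
    fun i => Set.Finite.bddAbove (Set.finite_range _)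
  have hbdd2 : BddAbove (Set.range fun i : Fin n => ⨆ j : Fin n,
      Real.sqrt (∑ l, (y t i l - y t j l) ^ 2)) :=
    Set.Finite.bddAbove (Set.finite_range _)
  have hd1 : ∀ i j, dist (Y t i) (Y t j) ≤ a t := by
    intro i j
    rw [ha t, ← hdist]
    exact le_trans (le_ciSup (hbdd i) j) (le_ciSup hbdd2 i)
  have hd2 : ∀ k i, dist (Y t k) (Y (t + 1) i) ≤ a t := by
    intro k i
    rw [hYrec i]
    exact conv_dist_le (c i) (hcnn i) (hcsum i) _ _ _ (fun j => hd1 k j)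
  have hd3 : ∀ i j, dist (Y (t + 1) i) (Y (t + 1) j) ≤ a t := by
    intro i j
    rw [hYrec j]
    exact conv_dist_le (c j) (hcnn j) (hcsum j) _ _ _
      (fun k => by rw [dist_comm]; exact hd2 k i)
  rw [ha (t + 1)]
  refine ciSup_le fun i => ciSup_le fun j => ?_
  rw [hdist]
  exact hd3 i j
end

section
/- (Theorem 3) Define a_t = max_{1 ≤ i,j ≤ n} ‖y_i^(t) − y_j^(t)‖₂, the maximum pairwise Euclidean distance among the WBMS iterates at step t. Then the sequence (a_t) converges, and consequently for every pre-fixed tolerance δ > 0 there exists T ∈ ℕ such that |a_{t+1} − a_t| < δ for all t ≥ T. -/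
/-- Distance between two convex combinations of the same points is bounded by the
maximum pairwise distance. -/
lemma wbms_convex_comb_norm_le {E : Type*} [NormedAddCommGroup E] [NormedSpace ℝ E]
    {n : ℕ} (z : Fin n → E) (c c' : Fin n → ℝ)
    (hc : ∀ j, 0 ≤ c j) (hc' : ∀ j, 0 ≤ c' j)
    (hs : ∑ j, c j = 1) (hs' : ∑ j, c' j = 1)
    (D : ℝ) (hD : ∀ j k, ‖z j - z k‖ ≤ D) :
    ‖(∑ j, c j • z j) - ∑ k, c' k • z k‖ ≤ D := by
  have key : (∑ j, c j • z j) - ∑ k, c' k • z k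
      = ∑ j, ∑ k, (c j * c' k) • (z j - z k) := by
    have e1 : (∑ j, c j • z j) = ∑ j, ∑ k, (c j * c' k) • z j := by
      refine Finset.sum_congr rfl fun j _ => ?_
      rw [← Finset.sum_smul, ← Finset.mul_sum, hs', mul_one]
    have e2 : (∑ k, c' k • z k) = ∑ j, ∑ k, (c j * c' k) • z k := by
      rw [Finset.sum_comm]
      refine Finset.sum_congr rfl fun k _ => ?_
      rw [← Finset.sum_smul, ← Finset.sum_mul, hs, one_mul]
    rw [e1, e2, ← Finset.sum_sub_distrib]
    refine Finset.sum_congr rfl fun j _ => ?_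
    rw [← Finset.sum_sub_distrib]
    refine Finset.sum_congr rfl fun k _ => ?_
    rw [smul_sub]
  rw [key]
  calc ‖∑ j, ∑ k, (c j * c' k) • (z j - z k)‖
      ≤ ∑ j, ‖∑ k, (c j * c' k) • (z j - z k)‖ := norm_sum_le _ _
    _ ≤ ∑ j : Fin n, ∑ k : Fin n, ‖(c j * c' k) • (z j - z k)‖ :=
        Finset.sum_le_sum fun j _ => norm_sum_le _ _
    _ ≤ ∑ j : Fin n, ∑ k : Fin n, (c j * c' k) * D := by
        refine Finset.sum_le_sum fun j _ => Finset.sum_le_sum fun k _ => ?_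
        rw [norm_smul, Real.norm_eq_abs, abs_of_nonneg (mul_nonneg (hc j) (hc' k))]
        exact mul_le_mul_of_nonneg_left (hD j k) (mul_nonneg (hc j) (hc' k))
    _ = D := by
        simp_rw [← Finset.sum_mul, ← Finset.mul_sum, hs', mul_one, hs, one_mul]

/-- Theorem 3: the maximum pairwise Euclidean distance `a_t`
among the WBMS iterates converges, and hence for any tolerance `δ > 0` there is
`T` with `|a_{t+1} − a_t| < δ` for all `t ≥ T`. -/
theorem wbms_max_pairwise_distance_converges
    (n p : ℕ) (hn : 0 < n) (hp : 0 < p)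
    (x : Fin n → Fin p → ℝ) (h lam : ℝ) (hh : 0 < h) (hlam : 0 < lam)
    (y : ℕ → Fin n → Fin p → ℝ) (w : ℕ → Fin p → ℝ)
    (hy0 : ∀ i, y 0 i = x i)
    (hw : ∀ t l, w t l =
      Real.exp (-(1 / (n * lam)) * ∑ i, (x i l - y t i l) ^ 2) /
        ∑ l' : Fin p, Real.exp (-(1 / (n * lam)) * ∑ i, (x i l' - y t i l') ^ 2))
    (hy : ∀ t i, y (t + 1) i =
      ∑ j, (Real.exp (-(∑ l, w t l * (y t i l - y t j l) ^ 2) / h) /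
        ∑ j' : Fin n, Real.exp (-(∑ l, w t l * (y t i l - y t j' l) ^ 2) / h)) • y t j)
    (a : ℕ → ℝ)
    (ha : ∀ t, a t = ⨆ i : Fin n, ⨆ j : Fin n,
      Real.sqrt (∑ l, (y t i l - y t j l) ^ 2)) :
    (∃ L : ℝ, Filter.Tendsto a Filter.atTop (nhds L)) ∧
      ∀ δ : ℝ, 0 < δ → ∃ T : ℕ, ∀ t ≥ T, |a (t + 1) - a t| < δ := by
  -- view the iterates in Euclidean space
  set Y : ℕ → Fin n → EuclideanSpace ℝ (Fin p) := fun t i => WithLp.toLp 2 (y t i) with hY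
  have hdist : ∀ t i j, Real.sqrt (∑ l, (y t i l - y t j l) ^ 2)
      = dist (Y t i) (Y t j) := by
    intro t i j
    rw [EuclideanSpace.dist_eq]
    congr 1
    refine Finset.sum_congr rfl fun l _ => ?_
    rw [Real.dist_eq, sq_abs]
  have ha' : ∀ t, a t = ⨆ i : Fin n, ⨆ j : Fin n, dist (Y t i) (Y t j) := by
    intro t; rw [ha t]
    exact iSup_congr fun i => iSup_congr fun j => hdist t i j
  have i0 : Fin n := ⟨0, hn⟩
  haveI : Nonempty (Fin n) := ⟨i0⟩
  have bdd : ∀ (f : Fin n → ℝ), BddAbove (Set.range f) :=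
    fun f => (Set.finite_range f).bddAbove
  have hle : ∀ t i j, dist (Y t i) (Y t j) ≤ a t := by
    intro t i j
    rw [ha' t]
    exact le_trans (le_ciSup (f := fun j => dist (Y t i) (Y t j)) (bdd _) j)
      (le_ciSup (f := fun i => ⨆ j, dist (Y t i) (Y t j)) (bdd _) i)
  have ha_nonneg : ∀ t, 0 ≤ a t := fun t =>
    le_trans dist_nonneg (hle t i0 i0)
  -- the convex-combination structure of the iteration
  have hstep : ∀ t, a (t + 1) ≤ a t := by
    intro t
    rw [ha' (t + 1)]
    refine ciSup_le fun i => ciSup_le fun j => ?_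
    set c : Fin n → Fin n → ℝ := fun i j =>
      Real.exp (-(∑ l, w t l * (y t i l - y t j l) ^ 2) / h) /
        ∑ j' : Fin n, Real.exp (-(∑ l, w t l * (y t i l - y t j' l) ^ 2) / h) with hc
    have hSpos : ∀ i, 0 < ∑ j' : Fin n,
        Real.exp (-(∑ l, w t l * (y t i l - y t j' l) ^ 2) / h) :=
      fun i => Finset.sum_pos (fun j' _ => Real.exp_pos _) ⟨i0, Finset.mem_univ i0⟩
    have hcnn : ∀ i j, 0 ≤ c i j := fun i j =>
      div_nonneg (Real.exp_pos _).le (hSpos i).le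
    have hcsum : ∀ i, ∑ j, c i j = 1 := by
      intro i
      rw [← Finset.sum_div, div_self (hSpos i).ne']
    have hYrec : ∀ i, Y (t + 1) i = ∑ j, c i j • Y t j := by
      intro i
      rw [show Y (t + 1) i = WithLp.toLp 2 (y (t + 1) i) from rfl, hy t i, WithLp.toLp_sum]
      simp only [WithLp.toLp_smul]
      rfl
    rw [dist_eq_norm, hYrec i, hYrec j]
    exact wbms_convex_comb_norm_le (Y t) (c i) (c j) (hcnn i) (hcnn j)
      (hcsum i) (hcsum j) (a t)
      (fun j' k => by rw [← dist_eq_norm]; exact hle t j' k)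
  have hanti : Antitone a := antitone_nat_of_succ_le hstep
  have hbdd : BddBelow (Set.range a) := ⟨0, fun r ⟨t, ht⟩ => ht ▸ ha_nonneg t⟩
  have hconv : Filter.Tendsto a Filter.atTop (nhds (⨅ t, a t)) :=
    tendsto_atTop_ciInf hanti hbdd
  refine ⟨⟨_, hconv⟩, fun δ hδ => ?_⟩
  have h1 : Filter.Tendsto (fun t => a (t + 1)) Filter.atTop (nhds (⨅ t, a t)) :=
    hconv.comp (Filter.tendsto_add_atTop_nat 1)
  have h2 : Filter.Tendsto (fun t => a (t + 1) - a t) Filter.atTop (nhds 0) := by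
    have := h1.sub hconv
    rwa [sub_self] at this
  rcases (Metric.tendsto_atTop.mp h2) δ hδ with ⟨T, hT⟩
  refine ⟨T, fun t ht => ?_⟩
  have := hT t ht
  rwa [Real.dist_eq, sub_zero] at this
end

section
/- (Theorem 5, convergence) For the population-level standard-deviation recursion of WBMS, if the feature-weight sequence converges, w_t → w for some w ≥ 0, then s_t → 0 as t → ∞. -/
open Filter

/-- Theorem 5, convergence: if the feature weights converge,
`w_t → w` with `w ≥ 0`, then the population-level standard deviations of WBMS
converge to zero. -/
theorem wbms_sd_tendsto_zero
    (h : ℝ) (hh : 0 < h) (w : ℕ → ℝ) (hw : ∀ t, 0 < w t)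
    (σ : ℝ) (hσ : 0 < σ)
    (s : ℕ → ℝ) (hs0 : s 0 = σ)
    (hrec : ∀ t, s (t + 1) = (s t) ^ 3 / ((s t) ^ 2 + h / (2 * w t)))
    (wl : ℝ) (hwl : 0 ≤ wl)
    (hconv : Filter.Tendsto w Filter.atTop (nhds wl)) :
    Filter.Tendsto s Filter.atTop (nhds 0) := by
  have hspos : ∀ t, 0 < s t := by
    intro t
    induction t with
    | zero => rw [hs0]; exact hσ
    | succ n ih =>
      rw [hrec]
      have := hw n
      positivity
  have hden : ∀ t, 0 < (s t) ^ 2 + h / (2 * w t) := by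
    intro t
    have := hw t
    have := hspos t
    positivity
  have hmono : ∀ t, s (t + 1) ≤ s t := by
    intro t
    rw [hrec, div_le_iff₀ (hden t)]
    have h1 := hspos t
    have h2 := hw t
    have h3 : 0 ≤ h / (2 * w t) := by positivity
    nlinarith
  have hanti : Antitone s := antitone_nat_of_succ_le hmono
  have hbdd : BddBelow (Set.range s) :=
    ⟨0, by rintro x ⟨t, rfl⟩; exact (hspos t).le⟩
  have hL : Tendsto s atTop (nhds (⨅ t, s t)) := tendsto_atTop_ciInf hanti hbdd
  set L := ⨅ t, s t with hLdef
  have hL0 : 0 ≤ L := le_ciInf fun t => (hspos t).le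
  have hLsucc : Tendsto (fun t => s (t + 1)) atTop (nhds L) :=
    hL.comp (tendsto_add_atTop_nat 1)
  suffices hLz : L = 0 by rwa [hLz] at hL
  rcases eq_or_lt_of_le hwl with hwl0 | hwlpos
  · -- wl = 0 : squeeze
    have hsub : ∀ t, s t ≤ σ := fun t => hs0 ▸ hanti (Nat.zero_le t)
    have hub : ∀ t, s (t + 1) ≤ 2 * σ ^ 3 / h * w t := by
      intro t
      rw [hrec]
      have h1 := hspos t
      have h2 := hw t
      have h3 := hsub t
      rw [div_le_iff₀ (hden t)]
      have key : s t ^ 3 ≤ 2 * σ ^ 3 / h * w t * (h / (2 * w t)) := by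
        have heqσ : 2 * σ ^ 3 / h * w t * (h / (2 * w t)) = σ ^ 3 := by
          field_simp
        rw [heqσ]
        exact pow_le_pow_left₀ h1.le h3 3
      nlinarith [mul_nonneg (mul_nonneg (by positivity : (0:ℝ) ≤ 2 * σ ^ 3 / h) h2.le)
        (sq_nonneg (s t))]
    have hg : Tendsto (fun t => 2 * σ ^ 3 / h * w t) atTop (nhds 0) := by
      have := hconv.const_mul (2 * σ ^ 3 / h)
      rwa [← hwl0, mul_zero] at this
    have hzero : Tendsto (fun t => s (t + 1)) atTop (nhds 0) :=
      squeeze_zero (fun t => (hspos (t + 1)).le) hub hg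
    exact tendsto_nhds_unique hLsucc hzero
  · -- wl > 0 : fixed point equation
    have hwlne : (2 * wl) ≠ 0 := by positivity
    have hc : Tendsto (fun t => (s t) ^ 2 + h / (2 * w t)) atTop
        (nhds (L ^ 2 + h / (2 * wl))) := by
      apply Tendsto.add
      · exact hL.pow 2
      · exact tendsto_const_nhds.div (hconv.const_mul 2) hwlne
    have hdenpos : 0 < L ^ 2 + h / (2 * wl) := by positivity
    have h1 : Tendsto (fun t => s (t + 1)) atTop
        (nhds (L ^ 3 / (L ^ 2 + h / (2 * wl)))) := by
      simp only [hrec]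
      exact (hL.pow 3).div hc hdenpos.ne'
    have heq : L = L ^ 3 / (L ^ 2 + h / (2 * wl)) :=
      tendsto_nhds_unique hLsucc h1
    have heq2 : L * (L ^ 2 + h / (2 * wl)) = L ^ 3 :=
      (eq_div_iff hdenpos.ne').mp heq
    have hcpos : 0 < h / (2 * wl) := by positivity
    nlinarith [heq2, hcpos, hL0]
end

section
/- (Theorem 5, cubic rate) For the population-level standard-deviation recursion of WBMS, if the feature-weight sequence converges to a positive limit, w_t → w with w > 0, then the convergence of s_t to 0 is of at least cubic order with asymptotic rate 2w/h: specifically, s_{t+1} / s_t³ → 2w/h as t → ∞. -/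
/-- Theorem 5, cubic rate: if `w_t → w > 0`, then the
convergence of `s_t` to zero is of at least cubic order with asymptotic rate
`2w/h`, i.e. `s_{t+1} / s_t³ → 2w/h`. -/
theorem wbms_sd_cubic_rate
    (h : ℝ) (hh : 0 < h) (w : ℕ → ℝ) (hw : ∀ t, 0 < w t)
    (σ : ℝ) (hσ : 0 < σ)
    (s : ℕ → ℝ) (hs0 : s 0 = σ)
    (hrec : ∀ t, s (t + 1) = (s t) ^ 3 / ((s t) ^ 2 + h / (2 * w t)))
    (wl : ℝ) (hwl : 0 < wl)
    (hconv : Filter.Tendsto w Filter.atTop (nhds wl)) :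
    Filter.Tendsto (fun t => s (t + 1) / (s t) ^ 3) Filter.atTop
      (nhds (2 * wl / h)) := by
  have hpos : ∀ t, 0 < s t := by
    intro t
    induction t with
    | zero => rw [hs0]; exact hσ
    | succ n ih =>
      rw [hrec n]
      have hd : 0 < (s n) ^ 2 + h / (2 * w n) :=
        add_pos_of_nonneg_of_pos (sq_nonneg _) (div_pos hh (mul_pos two_pos (hw n)))
      positivity
  have hanti : Antitone s := by
    refine antitone_nat_of_succ_le fun n => ?_
    rw [hrec n]
    have hd : 0 < (s n) ^ 2 + h / (2 * w n) :=
      add_pos_of_nonneg_of_pos (sq_nonneg _) (div_pos hh (mul_pos two_pos (hw n)))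
    rw [div_le_iff₀ hd]
    have h1 : 0 ≤ s n * (h / (2 * w n)) :=
      mul_nonneg (hpos n).le (div_pos hh (mul_pos two_pos (hw n))).le
    nlinarith [hpos n]
  -- s converges to some L ≥ 0
  have hbdd : BddBelow (Set.range s) := ⟨0, by rintro x ⟨t, rfl⟩; exact (hpos t).le⟩
  set L := ⨅ t, s t with hL
  have hsl : Filter.Tendsto s Filter.atTop (nhds L) :=
    tendsto_atTop_ciInf hanti hbdd
  have hL0 : 0 ≤ L := le_ciInf fun t => (hpos t).le
  -- limit of the recursion
  have hwinv : Filter.Tendsto (fun t => h / (2 * w t)) Filter.atTop (nhds (h / (2 * wl))) := by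
    apply Filter.Tendsto.div tendsto_const_nhds
    · exact (tendsto_const_nhds.mul hconv)
    · positivity
  have hden : Filter.Tendsto (fun t => (s t) ^ 2 + h / (2 * w t)) Filter.atTop
      (nhds (L ^ 2 + h / (2 * wl))) := ((hsl.pow 2).add hwinv)
  have hdenne : L ^ 2 + h / (2 * wl) ≠ 0 := by positivity
  have hrhs : Filter.Tendsto (fun t => (s t) ^ 3 / ((s t) ^ 2 + h / (2 * w t)))
      Filter.atTop (nhds (L ^ 3 / (L ^ 2 + h / (2 * wl)))) :=
    (hsl.pow 3).div hden hdenne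
  have hshift : Filter.Tendsto (fun t => s (t + 1)) Filter.atTop (nhds L) :=
    hsl.comp (Filter.tendsto_add_atTop_nat 1)
  have heq : L = L ^ 3 / (L ^ 2 + h / (2 * wl)) := by
    have : Filter.Tendsto (fun t => s (t + 1)) Filter.atTop
        (nhds (L ^ 3 / (L ^ 2 + h / (2 * wl)))) := by
      simpa only [hrec] using hrhs
    exact tendsto_nhds_unique hshift this
  have hLzero : L = 0 := by
    field_simp at heq
    have hLh : L * h = 0 := by nlinarith [heq]
    rcases mul_eq_zero.mp hLh with h' | h'
    · exact h'
    · exact absurd h' hh.ne'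
  -- now the main limit
  have hkey : ∀ t, s (t + 1) / (s t) ^ 3 = 1 / ((s t) ^ 2 + h / (2 * w t)) := by
    intro t
    rw [hrec t, div_right_comm, div_self (pow_ne_zero 3 (hpos t).ne')]
  have : Filter.Tendsto (fun t => 1 / ((s t) ^ 2 + h / (2 * w t))) Filter.atTop
      (nhds (1 / (0 ^ 2 + h / (2 * wl)))) := by
    apply Filter.Tendsto.div tendsto_const_nhds
    · rw [hLzero] at hsl; exact ((hsl.pow 2).add hwinv)
    · positivity
  have hval : (1 : ℝ) / ((0:ℝ) ^ 2 + h / (2 * wl)) = 2 * wl / h := by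
    rw [zero_pow (by norm_num), zero_add, one_div, ← one_div, div_div_eq_mul_div, one_mul]
  rw [← hval]
  simpa only [hkey] using this
end
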